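/- Let N ≥ 2, k ≥ 1, and let D ⊂ ℝ^N be a bounded open set containing k pairwise disjoint balls of radius r_D > 0. For δ > 0 set α := (N−1)/N + δ and let (Ω_1^δ,…,Ω_k^δ) ∈ 𝒫_k(D) minimize Σ_{i=1}^k P(Ω_i)/(ω_N|Ω_i|^α) over 𝒫_k(D). Then for every i = 1,…,k one has limsup_{δ→0^+} P(Ω_i^δ)/(ω_N|Ω_i^δ|^{(N−1)/N}) ≤ 1; in particular limsup_{δ→0^+} P(Ω_i^δ) ≤ ω_N|D|^{(N−1)/N}. -/

import Mathlib

open MeasureTheory Metric Set Filter Function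
open scoped ENNReal NNReal Topology symmDiff

noncomputable section

/-- Euclidean space ℝ^N. -/
abbrev Euc (N : ℕ) : Type := EuclideanSpace ℝ (Fin N)

/-- The essential (measure-theoretic) boundary of a measurable set: the set of
points at which the Lebesgue density of the set is neither 0 nor 1 (including
points where the density does not exist). -/
def essBoundary (N : ℕ) (Ω : Set (Euc N)) : Set (Euc N) :=
  {x | ¬ Tendsto (fun ρ : ℝ => volume (Ω ∩ ball x ρ) / volume (ball x ρ)) (𝓝[>] 0) (𝓝 0) ∧
       ¬ Tendsto (fun ρ : ℝ => volume (Ω ∩ ball x ρ) / volume (ball x ρ)) (𝓝[>] 0) (𝓝 1)}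

/-- The perimeter of a set: the (N-1)-dimensional Hausdorff measure of its
essential boundary (which agrees with the reduced boundary up to ℋ^{N-1}-null
sets, by Federer's theorem). -/
def perim (N : ℕ) (Ω : Set (Euc N)) : ℝ≥0∞ :=
  μH[(N : ℝ) - 1] (essBoundary N Ω)

/-- The α-Cheeger ratio P(Ω)/|Ω|^α, with the convention that it equals +∞ when
Ω is Lebesgue-null (the case of infinite perimeter being handled automatically
by the ℝ≥0∞-valued arithmetic). -/
def cheegerRatio (N : ℕ) (α : ℝ) (Ω : Set (Euc N)) : ℝ≥0∞ :=
  if volume Ω = 0 then ∞ else perim N Ω / (volume Ω) ^ α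

/-- The isoperimetric constant ω_N = P(B)/|B|^{(N-1)/N} for a ball B ⊂ ℝ^N. -/
def omegaN (N : ℕ) : ℝ≥0∞ :=
  perim N (ball (0 : Euc N) 1) / (volume (ball (0 : Euc N) 1)) ^ (((N : ℝ) - 1) / N)

/-- The ω_N-normalized α-Cheeger ratio P(Ω)/(ω_N |Ω|^α), equal to +∞ when |Ω| = 0. -/
def cheegerRatioW (N : ℕ) (α : ℝ) (Ω : Set (Euc N)) : ℝ≥0∞ :=
  if volume Ω = 0 then ∞ else perim N Ω / (omegaN N * (volume Ω) ^ α)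

/-- 𝒫_k(D): k-tuples of pairwise disjoint measurable subsets of D. -/
def IsCluster {N : ℕ} (D : Set (Euc N)) {k : ℕ} (Ω : Fin k → Set (Euc N)) : Prop :=
  (∀ i, Ω i ⊆ D) ∧ (∀ i, MeasurableSet (Ω i)) ∧ Pairwise (Disjoint on Ω)

open scoped Pointwise

namespace Stmt10

variable {N : ℕ}

/-- The similarity map `y ↦ c + l • y`. -/
def Tm (c : Euc N) (l : ℝ) : Euc N → Euc N := fun y => c + l • y

lemma Tm_image (c : Euc N) (l : ℝ) (s : Set (Euc N)) : Tm c l '' s = c +ᵥ l • s := by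
  simp only [← Set.image_smul, ← Set.image_vadd, Set.image_image, vadd_eq_add]
  rfl

lemma Tm_inj (c : Euc N) {l : ℝ} (hl : l ≠ 0) : Function.Injective (Tm c l) := by
  intro a b hab
  have h : l • a = l • b := by
    have := hab
    simpa [Tm] using this
  exact smul_right_injective _ hl h

lemma volume_Tm (c : Euc N) {l : ℝ} (hl : 0 < l) (s : Set (Euc N)) :
    volume (Tm c l '' s) = ENNReal.ofReal l ^ (N : ℝ) * volume s := by
  rw [Tm_image, measure_vadd, Measure.addHaar_smul, finrank_euclideanSpace_fin,
    abs_of_nonneg (pow_nonneg hl.le N), ENNReal.ofReal_pow hl.le, ← ENNReal.rpow_natCast]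

lemma Tm_ball (c : Euc N) {l : ℝ} (hl : 0 < l) (y : Euc N) (r : ℝ) :
    Tm c l '' ball y r = ball (Tm c l y) (l * r) := by
  rw [Tm_image, _root_.smul_ball hl.ne', Metric.vadd_ball]
  rw [Real.norm_of_nonneg hl.le]
  rfl

lemma Tm_measurableSet (c : Euc N) {l : ℝ} (hl : l ≠ 0) {S : Set (Euc N)}
    (hS : MeasurableSet S) : MeasurableSet (Tm c l '' S) := by
  have h : Tm c l '' S = (fun z : Euc N => l⁻¹ • (z - c)) ⁻¹' S := by
    ext z
    simp only [Tm, mem_image, mem_preimage]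
    constructor
    · rintro ⟨y, hy, rfl⟩
      simpa [smul_smul, inv_mul_cancel₀ hl] using hy
    · intro h
      exact ⟨l⁻¹ • (z - c), h, by simp [smul_smul, mul_inv_cancel₀ hl]⟩
  rw [h]
  exact hS.preimage (by fun_prop)

lemma rpow_ne_zero_ne_top {x : ℝ≥0∞} (h0 : x ≠ 0) (ht : x ≠ ∞) (e : ℝ) :
    x ^ e ≠ 0 ∧ x ^ e ≠ ∞ := by
  constructor
  · simp [ENNReal.rpow_eq_zero_iff, h0, ht]
  · simp [ENNReal.rpow_eq_top_iff, h0, ht]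

lemma density_Tm (c : Euc N) {l : ℝ} (hl : 0 < l) (S : Set (Euc N)) (y : Euc N)
    {ρ : ℝ} (hρ : 0 < ρ) :
    volume (Tm c l '' S ∩ ball (Tm c l y) ρ) / volume (ball (Tm c l y) ρ)
      = volume (S ∩ ball y (ρ / l)) / volume (ball y (ρ / l)) := by
  have hb : ball (Tm c l y) ρ = Tm c l '' ball y (ρ / l) := by
    rw [Tm_ball c hl, mul_div_cancel₀ _ hl.ne']
  have hC := rpow_ne_zero_ne_top (x := ENNReal.ofReal l)
    (by simp [hl]) ENNReal.ofReal_ne_top (N : ℝ)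
  rw [hb, ← Set.image_inter (Tm_inj c hl.ne'), volume_Tm c hl, volume_Tm c hl,
    ENNReal.mul_div_mul_left _ _ hC.1 hC.2]

lemma tendsto_div_nhdsWithin {l : ℝ} (hl : 0 < l) :
    Tendsto (fun ρ : ℝ => ρ / l) (𝓝[>] 0) (𝓝[>] 0) := by
  apply tendsto_nhdsWithin_of_tendsto_nhds_of_eventually_within
  · have : Tendsto (fun ρ : ℝ => ρ / l) (𝓝 0) (𝓝 (0 / l)) := tendsto_id.div_const l
    simpa using this.mono_left nhdsWithin_le_nhds
  · filter_upwards [self_mem_nhdsWithin] with ρ hρ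
    exact div_pos hρ hl

lemma essBoundary_Tm (c : Euc N) {l : ℝ} (hl : 0 < l) (S : Set (Euc N)) :
    essBoundary N (Tm c l '' S) ⊆ Tm c l '' essBoundary N S := by
  intro x hx
  set y := l⁻¹ • (x - c) with hy
  have hxy : Tm c l y = x := by
    simp [Tm, hy, smul_smul, mul_inv_cancel₀ hl.ne']
  refine ⟨y, ?_, hxy⟩
  obtain ⟨h0, h1⟩ := hx
  have key : ∀ L : ℝ≥0∞,
      Tendsto (fun ρ : ℝ => volume (S ∩ ball y ρ) / volume (ball y ρ)) (𝓝[>] 0) (𝓝 L) →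
      Tendsto (fun ρ : ℝ => volume (Tm c l '' S ∩ ball x ρ) / volume (ball x ρ))
        (𝓝[>] 0) (𝓝 L) := by
    intro L hF
    have hcomp := hF.comp (tendsto_div_nhdsWithin hl)
    refine hcomp.congr' ?_
    filter_upwards [self_mem_nhdsWithin] with ρ (hρ : ρ ∈ Ioi 0)
    rw [← hxy]
    exact (density_Tm c hl S y hρ).symm
  constructor
  · intro hF; exact h0 (key 0 hF)
  · intro hF; exact h1 (key 1 hF)

lemma lipschitz_Tm (c : Euc N) {l : ℝ} (hl : 0 < l) :
    LipschitzWith l.toNNReal (Tm c l) := by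
  apply LipschitzWith.of_dist_le_mul
  intro a b
  have h1 : Tm c l a - Tm c l b = l • (a - b) := by
    simp only [Tm, smul_sub]; abel
  rw [dist_eq_norm, dist_eq_norm, h1, norm_smul, Real.norm_of_nonneg hl.le,
    Real.coe_toNNReal _ hl.le]

lemma perim_Tm_le (hN : 1 ≤ N) (c : Euc N) {l : ℝ} (hl : 0 < l) (S : Set (Euc N)) :
    perim N (Tm c l '' S) ≤ ENNReal.ofReal l ^ ((N : ℝ) - 1) * perim N S := by
  have hd : (0 : ℝ) ≤ (N : ℝ) - 1 := by
    have : (1 : ℝ) ≤ N := by exact_mod_cast hN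
    linarith
  calc μH[(N : ℝ) - 1] (essBoundary N (Tm c l '' S))
      ≤ μH[(N : ℝ) - 1] (Tm c l '' essBoundary N S) :=
        measure_mono (essBoundary_Tm c hl S)
    _ ≤ (l.toNNReal : ℝ≥0∞) ^ ((N : ℝ) - 1) * μH[(N : ℝ) - 1] (essBoundary N S) :=
        (lipschitz_Tm c hl).hausdorffMeasure_image_le hd _
    _ = ENNReal.ofReal l ^ ((N : ℝ) - 1) * perim N S := rfl

lemma tendsto_rpow_exp {c : ℝ≥0∞} (h0 : c ≠ 0) (ht : c ≠ ∞) :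
    Tendsto (fun e : ℝ => c ^ e) (𝓝 0) (𝓝 1) := by
  lift c to ℝ≥0 using ht
  have hc0 : c ≠ 0 := by simpa using h0
  have hreal : Tendsto (fun e : ℝ => (c : ℝ) ^ e) (𝓝 0) (𝓝 1) := by
    have hcont := Real.continuousAt_const_rpow (a := (c : ℝ)) (b := 0)
      (by exact_mod_cast hc0)
    simpa [ContinuousAt, Real.rpow_zero] using hcont
  have hnn : Tendsto (fun e : ℝ => c ^ e) (𝓝 0) (𝓝 (1 : ℝ≥0)) := by
    rw [← NNReal.tendsto_coe]
    simpa [NNReal.coe_rpow] using hreal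
  have := (ENNReal.tendsto_coe (f := 𝓝 (0:ℝ)) (m := fun e : ℝ => c ^ e) (a := 1)).2 hnn
  simpa [ENNReal.coe_rpow_of_ne_zero hc0] using this

/-- key cancellation: `P/(A*s)*s = P/A` for `s ∈ (0,∞)`. -/
lemma div_mul_aux (P A : ℝ≥0∞) {s : ℝ≥0∞} (hs0 : s ≠ 0) (hst : s ≠ ∞) :
    P / (A * s) * s = P / A := by
  rw [div_eq_mul_inv, div_eq_mul_inv, ENNReal.mul_inv (Or.inr hst) (Or.inr hs0),
    mul_assoc, mul_assoc A⁻¹, ENNReal.inv_mul_cancel hs0 hst, mul_one]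

/-- scaling identity for the ratio. -/
lemma ratio_scale {lE P ω v : ℝ≥0∞} (hl0 : lE ≠ 0) (hlt : lE ≠ ∞)
    (hω0 : ω ≠ 0) (hωt : ω ≠ ∞) (hv0 : v ≠ 0) (hvt : v ≠ ∞) (a b e : ℝ) :
    (lE ^ a * P) / (ω * (lE ^ b * v) ^ e) = lE ^ (a - b * e) * (P / (ω * v ^ e)) := by
  have hlb := rpow_ne_zero_ne_top hl0 hlt (b * e)
  have hve := rpow_ne_zero_ne_top hv0 hvt e
  rw [ENNReal.mul_rpow_of_ne_top (rpow_ne_zero_ne_top hl0 hlt b).2 hvt, ← ENNReal.rpow_mul]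
  rw [div_eq_mul_inv, div_eq_mul_inv,
    ENNReal.mul_inv (Or.inl hω0) (Or.inl hωt),
    ENNReal.mul_inv (Or.inl hlb.1) (Or.inl hlb.2),
    ENNReal.mul_inv (Or.inl hω0) (Or.inl hωt)]
  rw [sub_eq_add_neg, ENNReal.rpow_add _ _ hl0 hlt, ENNReal.rpow_neg]
  ring

end Stmt10

namespace Stmt10B

def cheegerRatioW' (N : ℕ) (α : ℝ) (ω : ℝ≥0∞) (Ω : Set (Euc N)) : ℝ≥0∞ :=
  if volume Ω = 0 then ∞ else perim N Ω / (ω * (volume Ω) ^ α)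

open Stmt10

variable {N : ℕ}

lemma P1cancel {P1 V1 : ℝ≥0∞} (hP10 : P1 ≠ 0) (hP1t : P1 ≠ ∞) (hV10 : V1 ≠ 0)
    (hV1t : V1 ≠ ∞) (θ e : ℝ) : P1 / ((P1 / V1 ^ θ) * V1 ^ e) = V1 ^ (θ - e) := by
  have hθ := rpow_ne_zero_ne_top hV10 hV1t θ
  have he := rpow_ne_zero_ne_top hV10 hV1t e
  rw [div_eq_mul_inv P1 (V1 ^ θ), div_eq_mul_inv,
    ENNReal.mul_inv (Or.inr he.2) (Or.inr he.1),
    ENNReal.mul_inv (Or.inl hP10) (Or.inl hP1t), inv_inv,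
    sub_eq_add_neg, ENNReal.rpow_add _ _ hV10 hV1t, ENNReal.rpow_neg,
    ← mul_assoc, ← mul_assoc, ENNReal.mul_inv_cancel hP10 hP1t, one_mul]

lemma ratio_split {v : ℝ≥0∞} (hv0 : v ≠ 0) (hvt : v ≠ ∞) (P ω : ℝ≥0∞) (θ δr : ℝ) :
    P / (ω * v ^ (θ + δr)) * v ^ δr = P / (ω * v ^ θ) := by
  have hδ := rpow_ne_zero_ne_top hv0 hvt δr
  rw [ENNReal.rpow_add _ _ hv0 hvt, ← mul_assoc, div_mul_aux _ _ hδ.1 hδ.2]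

lemma ballterm (hN : 1 ≤ N) {θ δr : ℝ} (hθ : θ = ((N : ℝ) - 1) / N) (hδ : 0 < δr)
    {ω : ℝ≥0∞} (hωdef : ω = perim N (ball (0 : Euc N) 1) / (volume (ball (0 : Euc N) 1)) ^ θ)
    (hω0 : ω ≠ 0) (hωt : ω ≠ ∞) (z : Euc N) {r : ℝ} (hr : 0 < r) :
    cheegerRatioW' N (θ + δr) ω (ball z r) ≤ (volume (ball z r)) ^ (-δr) := by
  have hN0 : (N : ℝ) ≠ 0 := by positivity
  set V1 := volume (ball (0 : Euc N) 1) with hV1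
  set P1 := perim N (ball (0 : Euc N) 1) with hP1
  have hV10 : V1 ≠ 0 := (measure_ball_pos _ _ one_pos).ne'
  have hV1t : V1 ≠ ∞ := measure_ball_lt_top.ne
  have hVθ := rpow_ne_zero_ne_top hV10 hV1t θ
  have hP10 : P1 ≠ 0 := by
    intro h; rw [hωdef, h, ENNReal.zero_div] at hω0; exact hω0 rfl
  have hP1t : P1 ≠ ∞ := by
    intro h; rw [hωdef, h, ENNReal.top_div_of_ne_top hVθ.2] at hωt; exact hωt rfl
  have hr0 : ENNReal.ofReal r ≠ 0 := by simp [hr]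
  have hrt : ENNReal.ofReal r ≠ ∞ := ENNReal.ofReal_ne_top
  have himg : ball z r = Tm z r '' ball 0 1 := by
    rw [Tm_ball z hr]; simp [Tm]
  have hvol : volume (ball z r) = ENNReal.ofReal r ^ (N : ℝ) * V1 := by
    rw [himg, volume_Tm z hr, hV1]
  have hperim : perim N (ball z r) ≤ ENNReal.ofReal r ^ ((N : ℝ) - 1) * P1 := by
    rw [himg]; exact perim_Tm_le hN z hr _
  have hb0 : volume (ball z r) ≠ 0 := (measure_ball_pos _ _ hr).ne'
  rw [cheegerRatioW', if_neg hb0]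
  calc perim N (ball z r) / (ω * volume (ball z r) ^ (θ + δr))
      ≤ (ENNReal.ofReal r ^ ((N : ℝ) - 1) * P1) / (ω * volume (ball z r) ^ (θ + δr)) :=
        ENNReal.div_le_div_right hperim _
    _ = ENNReal.ofReal r ^ (((N : ℝ) - 1) - (N : ℝ) * (θ + δr)) * (P1 / (ω * V1 ^ (θ + δr))) := by
        rw [hvol]; exact ratio_scale hr0 hrt hω0 hωt hV10 hV1t _ _ _
    _ = ENNReal.ofReal r ^ (((N : ℝ) - 1) - (N : ℝ) * (θ + δr)) * V1 ^ (θ - (θ + δr)) := by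
        rw [hωdef, P1cancel hP10 hP1t hV10 hV1t]
    _ = (volume (ball z r)) ^ (-δr) := by
        rw [hvol, ENNReal.mul_rpow_of_ne_top (rpow_ne_zero_ne_top hr0 hrt _).2 hV1t,
          ← ENNReal.rpow_mul]
        congr 1
        · rw [hθ]; field_simp; ring
        · ring

lemma copyterm (hN : 1 ≤ N) {θ δr : ℝ} (hθ : θ = ((N : ℝ) - 1) / N)
    {ω : ℝ≥0∞} (hω0 : ω ≠ 0) (hωt : ω ≠ ∞) (c : Euc N) {l : ℝ} (hl : 0 < l)
    {S : Set (Euc N)} (hSt : volume S ≠ ∞) :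
    cheegerRatioW' N (θ + δr) ω (Tm c l '' S)
      ≤ (ENNReal.ofReal l) ^ (-((N : ℝ) * δr)) * cheegerRatioW' N (θ + δr) ω S := by
  have hN0 : (N : ℝ) ≠ 0 := by positivity
  have hl0 : ENNReal.ofReal l ≠ 0 := by simp [hl]
  have hlt : ENNReal.ofReal l ≠ ∞ := ENNReal.ofReal_ne_top
  have hle := rpow_ne_zero_ne_top hl0 hlt (-((N : ℝ) * δr))
  by_cases hv : volume S = 0
  · rw [show cheegerRatioW' N (θ + δr) ω S = ⊤ from if_pos hv, ENNReal.mul_top hle.1]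
    exact le_top
  · have hvol : volume (Tm c l '' S) = ENNReal.ofReal l ^ (N : ℝ) * volume S :=
      volume_Tm c hl S
    have hv' : volume (Tm c l '' S) ≠ 0 := by
      rw [hvol]; exact mul_ne_zero (rpow_ne_zero_ne_top hl0 hlt _).1 hv
    rw [cheegerRatioW', if_neg hv', cheegerRatioW', if_neg hv]
    calc perim N (Tm c l '' S) / (ω * volume (Tm c l '' S) ^ (θ + δr))
        ≤ (ENNReal.ofReal l ^ ((N : ℝ) - 1) * perim N S)
            / (ω * volume (Tm c l '' S) ^ (θ + δr)) :=
          ENNReal.div_le_div_right (perim_Tm_le hN c hl S) _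
      _ = ENNReal.ofReal l ^ (((N : ℝ) - 1) - (N : ℝ) * (θ + δr))
            * (perim N S / (ω * volume S ^ (θ + δr))) := by
          rw [hvol]; exact ratio_scale hl0 hlt hω0 hωt hv hSt _ _ _
      _ = ENNReal.ofReal l ^ (-((N : ℝ) * δr)) * (perim N S / (ω * volume S ^ (θ + δr))) := by
          congr 2
          rw [hθ]; field_simp; ring

end Stmt10B

namespace Stmt10B

lemma alg1 {a m cc : ℝ≥0∞} (h1 : 1 ≤ a) :
    (cc + 1) * (a * m) = cc * m + (a + cc * (a - 1)) * m := by
  obtain ⟨u, rfl⟩ := le_iff_exists_add.1 h1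
  rw [ENNReal.add_sub_cancel_left ENNReal.one_ne_top]
  ring

end Stmt10B



/-- with α = (N−1)/N + δ, if for every δ > 0 the cluster (Ω_i^δ)
minimizes Σ_i P(Ω_i)/(ω_N|Ω_i|^α) over 𝒫_k(D), and D contains k pairwise
disjoint balls of radius r_D > 0, then for every i
limsup_{δ→0⁺} P(Ω_i^δ)/(ω_N|Ω_i^δ|^{(N−1)/N}) ≤ 1, and in particular
limsup_{δ→0⁺} P(Ω_i^δ) ≤ ω_N|D|^{(N−1)/N}. -/
theorem stmt_10 (N k : ℕ) (hN : 2 ≤ N) (hk : 0 < k)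
    (D : Set (Euc N)) (hDopen : IsOpen D) (hDbdd : Bornology.IsBounded D)
    (x : Fin k → Euc N) (rD : ℝ) (hr : 0 < rD)
    (hsub : ∀ i, ball (x i) rD ⊆ D)
    (hdisj : Pairwise (Disjoint on fun i => ball (x i) rD))
    (Ω : ℝ → Fin k → Set (Euc N))
    (hmin : ∀ δ : ℝ, 0 < δ →
      IsCluster D (Ω δ) ∧
      ∀ Ω' : Fin k → Set (Euc N), IsCluster D Ω' →
        (∑ i, cheegerRatioW N (((N : ℝ) - 1) / N + δ) (Ω δ i)) ≤
          (∑ i, cheegerRatioW N (((N : ℝ) - 1) / N + δ) (Ω' i))) :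
    ∀ i,
      Filter.limsup
        (fun δ : ℝ => perim N (Ω δ i) / (omegaN N * (volume (Ω δ i)) ^ (((N : ℝ) - 1) / N)))
        (𝓝[>] 0) ≤ 1 ∧
      Filter.limsup (fun δ : ℝ => perim N (Ω δ i)) (𝓝[>] 0)
        ≤ omegaN N * (volume D) ^ (((N : ℝ) - 1) / N) := by
  classical
  intro i
  have hN1 : 1 ≤ N := le_trans (by norm_num) hN
  have hN0 : (N : ℝ) ≠ 0 := by positivity
  set θ : ℝ := ((N : ℝ) - 1) / N with hθdef
  have hθ0 : 0 ≤ θ := by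
    rw [hθdef]
    apply div_nonneg
    · have h2 : (2 : ℝ) ≤ N := by exact_mod_cast hN
      linarith
    · positivity
  obtain ⟨R0, hR0⟩ := hDbdd.subset_ball (0 : Euc N)
  have hvDt : volume D ≠ ∞ := ((measure_mono hR0).trans_lt measure_ball_lt_top).ne
  have hvD0 : volume D ≠ 0 :=
    fun h => (((measure_ball_pos volume (x i) hr).trans_le (measure_mono (hsub i))).ne' h)
  have hBcl : IsCluster D (fun l => ball (x l) rD) :=
    ⟨hsub, fun _ => measurableSet_ball, hdisj⟩
  have hWeq : ∀ (α : ℝ) (Ω' : Set (Euc N)),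
      cheegerRatioW N α Ω' = Stmt10B.cheegerRatioW' N α (omegaN N) Ω' := fun _ _ => rfl
  have hωdef : omegaN N = perim N (ball (0 : Euc N) 1) / (volume (ball (0 : Euc N) 1)) ^ θ := rfl
  have hV10 : volume (ball (0 : Euc N) 1) ≠ 0 := (measure_ball_pos _ _ one_pos).ne'
  have hV1t : volume (ball (0 : Euc N) 1) ≠ ∞ := measure_ball_lt_top.ne
  have hvolb : ∀ z : Euc N,
      volume (ball z rD) = ENNReal.ofReal rD ^ (N : ℝ) * volume (ball (0 : Euc N) 1) := by
    intro z
    rw [show ball z rD = Stmt10.Tm z rD '' ball 0 1 by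
      rw [Stmt10.Tm_ball z hr]; simp [Stmt10.Tm]]
    exact Stmt10.volume_Tm z hr _
  rcases eq_or_ne (omegaN N) 0 with hω0 | hω0
  · -- Case ω = 0
    have hP1 : perim N (ball (0 : Euc N) 1) = 0 := by
      have h := hω0
      rw [hωdef, ENNReal.div_eq_zero_iff] at h
      rcases h with h | h
      · exact h
      · exact absurd h (Stmt10.rpow_ne_zero_ne_top hV10 hV1t θ).2
    have hball0 : ∀ z : Euc N, perim N (ball z rD) = 0 := by
      intro z
      refine le_antisymm ?_ (zero_le)
      calc perim N (ball z rD)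
          ≤ ENNReal.ofReal rD ^ ((N : ℝ) - 1) * perim N (ball (0 : Euc N) 1) := by
            rw [show ball z rD = Stmt10.Tm z rD '' ball 0 1 by
              rw [Stmt10.Tm_ball z hr]; simp [Stmt10.Tm]]
            exact Stmt10.perim_Tm_le hN1 z hr _
        _ = 0 := by rw [hP1, mul_zero]
    have hkey : ∀ δ : ℝ, 0 < δ → perim N (Ω δ i) = 0 := by
      intro δ hδ
      obtain ⟨hcl, hopt⟩ := hmin δ hδ
      have hz : ∀ l : Fin k, cheegerRatioW N (θ + δ) (ball (x l) rD) = 0 := by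
        intro l
        rw [cheegerRatioW, if_neg (measure_ball_pos volume (x l) hr).ne', hball0,
          ENNReal.zero_div]
      have hsum0 : (∑ j, cheegerRatioW N (θ + δ) (Ω δ j)) = 0 := by
        refine le_antisymm (le_trans (hopt _ hBcl) ?_) (zero_le)
        simp [hz]
      have hti : cheegerRatioW N (θ + δ) (Ω δ i) = 0 := by
        refine le_antisymm ?_ (zero_le)
        rw [← hsum0]
        exact Finset.single_le_sum (f := fun j => cheegerRatioW N (θ + δ) (Ω δ j))
          (fun j _ => zero_le) (Finset.mem_univ i)
      have hv0 : volume (Ω δ i) ≠ 0 := by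
        intro h; rw [cheegerRatioW, if_pos h] at hti; exact ENNReal.top_ne_zero hti
      by_contra hP
      rw [cheegerRatioW, if_neg hv0, hω0, zero_mul, ENNReal.div_zero hP] at hti
      exact ENNReal.top_ne_zero hti
    constructor
    · have h1 : Filter.limsup
          (fun δ : ℝ => perim N (Ω δ i) / (omegaN N * (volume (Ω δ i)) ^ θ)) (𝓝[>] 0)
          ≤ Filter.limsup (fun _ : ℝ => (0 : ℝ≥0∞)) (𝓝[>] 0) := by
        refine limsup_le_limsup (eventually_nhdsWithin_of_forall fun δ hδ => ?_)
        show perim N (Ω δ i) / (omegaN N * volume (Ω δ i) ^ θ) ≤ (0 : ℝ≥0∞)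
        rw [hkey δ hδ, ENNReal.zero_div]
      rw [limsup_const] at h1
      exact h1.trans (zero_le)
    · have h1 : Filter.limsup (fun δ : ℝ => perim N (Ω δ i)) (𝓝[>] 0)
          ≤ Filter.limsup (fun _ : ℝ => (0 : ℝ≥0∞)) (𝓝[>] 0) := by
        refine limsup_le_limsup (eventually_nhdsWithin_of_forall fun δ hδ => ?_)
        show perim N (Ω δ i) ≤ (0 : ℝ≥0∞)
        rw [hkey δ hδ]
      rw [limsup_const] at h1
      exact h1.trans (zero_le)
  rcases eq_or_ne (omegaN N) ⊤ with hωt | hωt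
  · -- Case ω = ⊤
    have hvols : ∀ δ : ℝ, 0 < δ → volume (Ω δ i) ≠ 0 := by
      intro δ hδ
      obtain ⟨hcl, hopt⟩ := hmin δ hδ
      have hz : ∀ l : Fin k, cheegerRatioW N (θ + δ) (ball (x l) rD) = 0 := by
        intro l
        have hb0 : volume (ball (x l) rD) ≠ 0 := (measure_ball_pos volume (x l) hr).ne'
        have hbt : volume (ball (x l) rD) ≠ ∞ := measure_ball_lt_top.ne
        rw [cheegerRatioW, if_neg hb0, hωt,
          ENNReal.top_mul (Stmt10.rpow_ne_zero_ne_top hb0 hbt (θ + δ)).1, ENNReal.div_top]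
      have hsum0 : (∑ j, cheegerRatioW N (θ + δ) (Ω δ j)) = 0 := by
        refine le_antisymm (le_trans (hopt _ hBcl) ?_) (zero_le)
        simp [hz]
      have hti : cheegerRatioW N (θ + δ) (Ω δ i) = 0 := by
        refine le_antisymm ?_ (zero_le)
        rw [← hsum0]
        exact Finset.single_le_sum (f := fun j => cheegerRatioW N (θ + δ) (Ω δ j))
          (fun j _ => zero_le) (Finset.mem_univ i)
      intro h
      rw [cheegerRatioW, if_pos h] at hti
      exact ENNReal.top_ne_zero hti
    constructor
    · have h1 : Filter.limsup
          (fun δ : ℝ => perim N (Ω δ i) / (omegaN N * (volume (Ω δ i)) ^ θ)) (𝓝[>] 0)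
          ≤ Filter.limsup (fun _ : ℝ => (0 : ℝ≥0∞)) (𝓝[>] 0) := by
        refine limsup_le_limsup (eventually_nhdsWithin_of_forall fun δ hδ => ?_)
        show perim N (Ω δ i) / (omegaN N * volume (Ω δ i) ^ θ) ≤ (0 : ℝ≥0∞)
        obtain ⟨hcl, -⟩ := hmin δ hδ
        have hvt' : volume (Ω δ i) ≠ ∞ := ((measure_mono (hcl.1 i)).trans_lt hvDt.lt_top).ne
        have hden : omegaN N * volume (Ω δ i) ^ θ = ⊤ := by
          rw [hωt]
          exact ENNReal.top_mul (Stmt10.rpow_ne_zero_ne_top (hvols δ hδ) hvt' θ).1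
        rw [hden, ENNReal.div_top]
      rw [limsup_const] at h1
      exact h1.trans (zero_le)
    · rw [hωt, ENNReal.top_mul (Stmt10.rpow_ne_zero_ne_top hvD0 hvDt θ).1]
      exact le_top
  -- Case ω ∈ (0,∞)
  · set lam : ℝ := rD / (2 * max R0 rD) with hlam
    have hRpos : 0 < max R0 rD := lt_max_of_lt_right hr
    have hlam0 : 0 < lam := div_pos hr (by positivity)
    have hlam1 : lam ≤ 1 := by
      rw [hlam, div_le_one (by positivity)]
      have h1 : rD ≤ max R0 rD := le_max_right _ _
      linarith
    have hsubD : ∀ S : Set (Euc N), S ⊆ D → ∀ j : Fin k,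
        Stmt10.Tm (x j) lam '' S ⊆ ball (x j) rD := by
      intro S hS j z hz
      obtain ⟨y, hy, rfl⟩ := hz
      have hyR : ‖y‖ < max R0 rD :=
        lt_of_lt_of_le (by simpa [dist_zero_right] using hR0 (hS hy)) (le_max_left _ _)
      have hdist : dist (Stmt10.Tm (x j) lam y) (x j) = lam * ‖y‖ := by
        simp [Stmt10.Tm, dist_eq_norm, norm_smul, abs_of_nonneg hlam0.le]
      rw [mem_ball, hdist]
      calc lam * ‖y‖ < lam * max R0 rD := mul_lt_mul_of_pos_left hyR hlam0
        _ = rD / 2 := by rw [hlam]; field_simp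
        _ < rD := by linarith
    have hcopycl : ∀ S : Set (Euc N), S ⊆ D → MeasurableSet S →
        IsCluster D (fun j => Stmt10.Tm (x j) lam '' S) := by
      intro S hS hm
      refine ⟨fun j => (hsubD S hS j).trans (hsub j),
        fun j => Stmt10.Tm_measurableSet _ hlam0.ne' hm, ?_⟩
      intro a b hab
      exact (hdisj hab).mono (hsubD S hS a) (hsubD S hS b)
    set lE : ℝ≥0∞ := ENNReal.ofReal lam with hlE
    have hlE0 : lE ≠ 0 := by simp [hlE, hlam0]
    have hlEt : lE ≠ ⊤ := ENNReal.ofReal_ne_top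
    have hlE1 : lE ≤ 1 := by rw [hlE]; exact ENNReal.ofReal_le_one.2 hlam1
    set bV : ℝ≥0∞ := ENNReal.ofReal rD ^ (N : ℝ) * volume (ball (0 : Euc N) 1) with hbVdef
    have hrE0 : ENNReal.ofReal rD ≠ 0 := by simp [hr]
    have hbV0 : bV ≠ 0 :=
      mul_ne_zero (Stmt10.rpow_ne_zero_ne_top hrE0 ENNReal.ofReal_ne_top _).1 hV10
    have hbVt : bV ≠ ⊤ :=
      ENNReal.mul_ne_top (Stmt10.rpow_ne_zero_ne_top hrE0 ENNReal.ofReal_ne_top _).2 hV1t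
    set M : ℝ≥0∞ := max 1 (volume D) with hM
    have hM0 : M ≠ 0 := (zero_lt_one.trans_le (le_max_left _ _)).ne'
    have hMt : M ≠ ⊤ := (max_lt ENNReal.one_lt_top hvDt.lt_top).ne
    set c' : ℝ≥0∞ := ((k - 1 : ℕ) : ℝ≥0∞) with hc'
    have hc't : c' ≠ ⊤ := ENNReal.natCast_ne_top _
    have hkc : ((k : ℕ) : ℝ≥0∞) = c' + 1 := by
      rw [hc']
      norm_cast
      omega
    set g : ℝ → ℝ≥0∞ := fun δ =>
      (lE ^ (-((N : ℝ) * δ)) + c' * (lE ^ (-((N : ℝ) * δ)) - 1)) * bV ^ (-δ) * M ^ δ with hg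
    have hbound : ∀ δ : ℝ, 0 < δ →
        perim N (Ω δ i) / (omegaN N * volume (Ω δ i) ^ θ) ≤ g δ ∧
        volume (Ω δ i) ≠ 0 ∧ volume (Ω δ i) ≠ ⊤ ∧ volume (Ω δ i) ≤ volume D := by
      intro δ hδ
      obtain ⟨hcl, hopt⟩ := hmin δ hδ
      have hvit : ∀ j, volume (Ω δ j) ≠ ⊤ :=
        fun j => ((measure_mono (hcl.1 j)).trans_lt hvDt.lt_top).ne
      have hsumball : (∑ j, cheegerRatioW N (θ + δ) (Ω δ j)) ≤ (k : ℝ≥0∞) * bV ^ (-δ) := by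
        refine (hopt _ hBcl).trans ?_
        calc (∑ l, cheegerRatioW N (θ + δ) (ball (x l) rD))
            ≤ ∑ _l : Fin k, bV ^ (-δ) := by
              refine Finset.sum_le_sum fun l _ => ?_
              rw [hWeq]
              refine (Stmt10B.ballterm hN1 hθdef hδ hωdef hω0 hωt (x l) hr).trans_eq ?_
              rw [hvolb (x l)]
          _ = (k : ℝ≥0∞) * bV ^ (-δ) := by
              rw [Finset.sum_const, Finset.card_univ, Fintype.card_fin, nsmul_eq_mul]
      obtain ⟨j₀, -, hj₀⟩ := Finset.exists_min_image Finset.univ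
        (fun j => cheegerRatioW N (θ + δ) (Ω δ j)) ⟨i, Finset.mem_univ i⟩
      have hk0 : ((k : ℕ) : ℝ≥0∞) ≠ 0 := Nat.cast_ne_zero.2 hk.ne'
      have hKm : (k : ℝ≥0∞) * cheegerRatioW N (θ + δ) (Ω δ j₀) ≤ (k : ℝ≥0∞) * bV ^ (-δ) := by
        refine le_trans ?_ hsumball
        have h := Finset.card_nsmul_le_sum Finset.univ
          (fun j => cheegerRatioW N (θ + δ) (Ω δ j)) (cheegerRatioW N (θ + δ) (Ω δ j₀))
          (fun j _ => hj₀ j (Finset.mem_univ j))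
        simpa [Finset.card_univ, nsmul_eq_mul] using h
      have hm_le : cheegerRatioW N (θ + δ) (Ω δ j₀) ≤ bV ^ (-δ) :=
        (ENNReal.mul_le_mul_iff_right hk0 (ENNReal.natCast_ne_top k)).1 hKm
      have hbVδ := Stmt10.rpow_ne_zero_ne_top hbV0 hbVt (-δ)
      have hmt : cheegerRatioW N (θ + δ) (Ω δ j₀) ≠ ⊤ := ne_top_of_le_ne_top hbVδ.2 hm_le
      have hsumcopy : (∑ j, cheegerRatioW N (θ + δ) (Ω δ j))
          ≤ (k : ℝ≥0∞) * (lE ^ (-((N : ℝ) * δ)) * cheegerRatioW N (θ + δ) (Ω δ j₀)) := by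
        refine (hopt _ (hcopycl _ (hcl.1 j₀) (hcl.2.1 j₀))).trans ?_
        calc (∑ l, cheegerRatioW N (θ + δ) (Stmt10.Tm (x l) lam '' Ω δ j₀))
            ≤ ∑ _l : Fin k, lE ^ (-((N : ℝ) * δ)) * cheegerRatioW N (θ + δ) (Ω δ j₀) := by
              refine Finset.sum_le_sum fun l _ => ?_
              rw [hWeq, hWeq]
              exact Stmt10B.copyterm hN1 hθdef hω0 hωt (x l) hlam0 (hvit j₀)
          _ = _ := by
              rw [Finset.sum_const, Finset.card_univ, Fintype.card_fin, nsmul_eq_mul]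
      have herase : cheegerRatioW N (θ + δ) (Ω δ i) + c' * cheegerRatioW N (θ + δ) (Ω δ j₀)
          ≤ ∑ j, cheegerRatioW N (θ + δ) (Ω δ j) := by
        rw [← Finset.add_sum_erase Finset.univ _ (Finset.mem_univ i)]
        refine add_le_add le_rfl ?_
        have hcard : (Finset.univ.erase i).card = k - 1 := by
          rw [Finset.card_erase_of_mem (Finset.mem_univ i), Finset.card_univ, Fintype.card_fin]
        have h := Finset.card_nsmul_le_sum (Finset.univ.erase i)
          (fun j => cheegerRatioW N (θ + δ) (Ω δ j)) (cheegerRatioW N (θ + δ) (Ω δ j₀))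
          (fun j _ => hj₀ j (Finset.mem_univ j))
        rw [hcard, nsmul_eq_mul] at h
        exact h
      have hone : (1 : ℝ≥0∞) ≤ lE ^ (-((N : ℝ) * δ)) := by
        have hexp : -((N : ℝ) * δ) ≤ 0 := by
          have : 0 ≤ (N : ℝ) * δ := by positivity
          linarith
        have h := ENNReal.rpow_le_rpow_of_exponent_ge hlE1 hexp
        simpa [ENNReal.rpow_zero] using h
      have halg : (k : ℝ≥0∞) * (lE ^ (-((N : ℝ) * δ)) * cheegerRatioW N (θ + δ) (Ω δ j₀))
          = c' * cheegerRatioW N (θ + δ) (Ω δ j₀)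
            + (lE ^ (-((N : ℝ) * δ)) + c' * (lE ^ (-((N : ℝ) * δ)) - 1))
              * cheegerRatioW N (θ + δ) (Ω δ j₀) := by
        rw [hkc]
        exact Stmt10B.alg1 hone
      have hti : cheegerRatioW N (θ + δ) (Ω δ i)
          ≤ (lE ^ (-((N : ℝ) * δ)) + c' * (lE ^ (-((N : ℝ) * δ)) - 1))
              * cheegerRatioW N (θ + δ) (Ω δ j₀) := by
        have h := herase.trans (hsumcopy.trans_eq halg)
        rw [add_comm (c' * cheegerRatioW N (θ + δ) (Ω δ j₀))] at h
        exact (ENNReal.add_le_add_iff_right (ENNReal.mul_ne_top hc't hmt)).1 h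
      have hlEδ := Stmt10.rpow_ne_zero_ne_top hlE0 hlEt (-((N : ℝ) * δ))
      have hXfin : (lE ^ (-((N : ℝ) * δ)) + c' * (lE ^ (-((N : ℝ) * δ)) - 1)) ≠ ⊤ :=
        ENNReal.add_ne_top.2 ⟨hlEδ.2,
          ENNReal.mul_ne_top hc't (ne_top_of_le_ne_top hlEδ.2 tsub_le_self)⟩
      have htit : cheegerRatioW N (θ + δ) (Ω δ i) ≠ ⊤ :=
        ne_top_of_le_ne_top (ENNReal.mul_ne_top hXfin hmt) hti
      have hvi0 : volume (Ω δ i) ≠ 0 := by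
        intro h; rw [cheegerRatioW, if_pos h] at htit; exact htit rfl
      refine ⟨?_, hvi0, hvit i, measure_mono (hcl.1 i)⟩
      have hratio : perim N (Ω δ i) / (omegaN N * volume (Ω δ i) ^ θ)
          = cheegerRatioW N (θ + δ) (Ω δ i) * volume (Ω δ i) ^ δ := by
        rw [cheegerRatioW, if_neg hvi0, Stmt10B.ratio_split hvi0 (hvit i)]
      rw [hratio, hg]
      calc cheegerRatioW N (θ + δ) (Ω δ i) * volume (Ω δ i) ^ δ
          ≤ ((lE ^ (-((N : ℝ) * δ)) + c' * (lE ^ (-((N : ℝ) * δ)) - 1)) * bV ^ (-δ)) * M ^ δ := by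
            refine mul_le_mul' (hti.trans (mul_le_mul' le_rfl hm_le)) ?_
            exact ENNReal.rpow_le_rpow
              ((measure_mono (hcl.1 i)).trans (le_max_right 1 _)) hδ.le
        _ = _ := rfl
    have htend : Tendsto g (𝓝[>] 0) (𝓝 1) := by
      have t1 : Tendsto (fun δ : ℝ => lE ^ (-((N : ℝ) * δ))) (𝓝 0) (𝓝 1) := by
        have hexp : Tendsto (fun δ : ℝ => -((N : ℝ) * δ)) (𝓝 0) (𝓝 0) := by
          have h := ((tendsto_const_nhds (x := (N : ℝ)) (f := 𝓝 (0 : ℝ))).mul tendsto_id).neg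
          simpa using h
        exact (Stmt10.tendsto_rpow_exp hlE0 hlEt).comp hexp
      have t2 : Tendsto (fun δ : ℝ => bV ^ (-δ)) (𝓝 0) (𝓝 1) := by
        have hexp : Tendsto (fun δ : ℝ => -δ) (𝓝 (0 : ℝ)) (𝓝 0) := by
          simpa using (continuous_neg.tendsto (0 : ℝ))
        exact (Stmt10.tendsto_rpow_exp hbV0 hbVt).comp hexp
      have t3 : Tendsto (fun δ : ℝ => M ^ δ) (𝓝 (0 : ℝ)) (𝓝 1) :=
        (Stmt10.tendsto_rpow_exp hM0 hMt).comp tendsto_id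
      have t4 : Tendsto (fun δ : ℝ => lE ^ (-((N : ℝ) * δ)) - 1) (𝓝 0) (𝓝 0) := by
        have h := ENNReal.Tendsto.sub t1 (tendsto_const_nhds (x := (1 : ℝ≥0∞)))
          (Or.inr ENNReal.one_ne_top)
        simpa using h
      have t5 : Tendsto (fun δ : ℝ => c' * (lE ^ (-((N : ℝ) * δ)) - 1)) (𝓝 0) (𝓝 0) := by
        have h := ENNReal.Tendsto.const_mul t4 (a := c') (Or.inr hc't)
        simpa using h
      have t6 : Tendsto
          (fun δ : ℝ => lE ^ (-((N : ℝ) * δ)) + c' * (lE ^ (-((N : ℝ) * δ)) - 1))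
          (𝓝 0) (𝓝 1) := by
        have h := t1.add t5
        simpa using h
      have t7 := ENNReal.Tendsto.mul t6 (Or.inl one_ne_zero) t2 (Or.inl one_ne_zero)
      rw [one_mul] at t7
      have t8 := ENNReal.Tendsto.mul t7 (Or.inl one_ne_zero) t3 (Or.inl one_ne_zero)
      rw [one_mul] at t8
      exact (t8.mono_left nhdsWithin_le_nhds)
    constructor
    · refine le_trans ?_ (le_of_eq htend.limsup_eq)
      refine limsup_le_limsup (eventually_nhdsWithin_of_forall fun δ hδ => ?_)
      exact (hbound δ hδ).1
    · have hconst : Tendsto (fun δ : ℝ => g δ * (omegaN N * volume D ^ θ)) (𝓝[>] 0)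
          (𝓝 (omegaN N * volume D ^ θ)) := by
        have h := ENNReal.Tendsto.mul_const htend (b := omegaN N * volume D ^ θ)
          (Or.inl one_ne_zero)
        simpa using h
      refine le_trans ?_ (le_of_eq hconst.limsup_eq)
      refine limsup_le_limsup (eventually_nhdsWithin_of_forall fun δ hδ => ?_)
      show perim N (Ω δ i) ≤ g δ * (omegaN N * volume D ^ θ)
      obtain ⟨hfg, hv0, hvt', hvle⟩ := hbound δ hδ
      have hden0 : omegaN N * volume (Ω δ i) ^ θ ≠ 0 :=
        mul_ne_zero hω0 (Stmt10.rpow_ne_zero_ne_top hv0 hvt' θ).1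
      have hdent : omegaN N * volume (Ω δ i) ^ θ ≠ ⊤ :=
        ENNReal.mul_ne_top hωt (Stmt10.rpow_ne_zero_ne_top hv0 hvt' θ).2
      calc perim N (Ω δ i)
          = perim N (Ω δ i) / (omegaN N * volume (Ω δ i) ^ θ)
              * (omegaN N * volume (Ω δ i) ^ θ) :=
            (ENNReal.div_mul_cancel hden0 hdent).symm
        _ ≤ g δ * (omegaN N * volume D ^ θ) := by
            refine mul_le_mul' hfg (mul_le_mul' le_rfl ?_)
            exact ENNReal.rpow_le_rpow hvle hθ0
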